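/- arXiv:1207.4219 — 2 statements merged into one kernel-verified Lean document; each statement's English description precedes it below -/
import Mathlib

section
/- Let t ≥ 2 be an integer and k an odd positive integer. Then the radio k-labeling number of the infinite distance graph D(1,2,...,t) satisfies rl_k(D(1,2,...,t)) ≤ (t/2)k² + (t/2)k. -/
/-- The infinite distance graph on `ℤ` with distance set `D`: distinct integers
`i, j` are adjacent iff `|i - j| ∈ D`. -/
def distGraph (D : Set ℤ) : SimpleGraph ℤ where
  Adj i j := i ≠ j ∧ |i - j| ∈ D
  symm := by
    constructor
    intro i j h
    exact ⟨h.1.symm, by rw [abs_sub_comm]; exact h.2⟩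
  loopless := by
    constructor
    intro i h
    exact h.1 rfl

/-- `c : ℤ → ℕ` is a radio `k`-labeling of the graph `G` on `ℤ`:
`|c(u) - c(v)| ≥ k + 1 - d(u,v)` for all distinct `u, v`. -/
def IsRadioLabeling (G : SimpleGraph ℤ) (k : ℕ) (c : ℤ → ℕ) : Prop :=
  ∀ x y : ℤ, x ≠ y → (k : ℤ) + 1 - G.dist x y ≤ |(c x : ℤ) - c y|

lemma walk_bound (t : ℕ) {x y : ℤ}
    (w : (distGraph {d : ℤ | 1 ≤ d ∧ d ≤ (t:ℤ)}).Walk x y) :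
    |x - y| ≤ t * w.length := by
  induction w with
  | nil => simp
  | @cons u v z h w ih =>
      have h1 : |u - v| ≤ (t:ℤ) := h.2.2
      have h2 : |u - z| ≤ |u - v| + |v - z| := abs_sub_le u v z
      simp only [SimpleGraph.Walk.length_cons]
      push_cast
      linarith

lemma reach (t : ℕ) (ht : 1 ≤ t) (x y : ℤ) :
    (distGraph {d : ℤ | 1 ≤ d ∧ d ≤ (t:ℤ)}).Reachable x y := by
  set G := distGraph {d : ℤ | 1 ≤ d ∧ d ≤ (t:ℤ)} with hG
  have step : ∀ z : ℤ, G.Adj z (z+1) := by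
    intro z
    refine ⟨by omega, ?_⟩
    have : |z - (z+1)| = 1 := by
      have : z - (z+1) = -1 := by ring
      rw [this]; simp
    rw [this]
    exact ⟨le_refl _, by exact_mod_cast ht⟩
  have main : ∀ (d : ℕ) (z : ℤ), G.Reachable z (z + d) := by
    intro d
    induction d with
    | zero => intro z; simpa using SimpleGraph.Reachable.refl z
    | succ n ih =>
        intro z
        have h1 : G.Reachable z (z + n) := ih z
        have h2 : G.Reachable (z + n) (z + n + 1) := (step (z + n)).reachable
        have : (z : ℤ) + (n + 1 : ℕ) = z + n + 1 := by push_cast; ring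
        rw [this]
        exact h1.trans h2
  rcases le_total x y with hxy | hxy
  · have h1 : y = x + ((y - x).toNat : ℤ) := by omega
    rw [h1]; exact main _ x
  · have h1 : x = y + ((x - y).toNat : ℤ) := by omega
    rw [h1]; exact (main _ y).symm

-- key arithmetic lemma
lemma shift_bound (B p δ e : ℤ) (hB : 0 < B) (h1 : B ≤ |δ|) (h2 : |δ| ≤ p - B) :
    B ≤ |δ + p * e| := by
  rcases eq_or_ne e 0 with rfl | he
  · simpa using h1
  · have hp : 0 < p := by have := abs_nonneg δ; linarith
    have h3 : p ≤ |p * e| := by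
      rw [abs_mul]
      have : 1 ≤ |e| := Int.one_le_abs he
      nlinarith [abs_nonneg p, abs_of_pos hp]
    have h4 : |p * e| - |δ| ≤ |δ + p * e| := by
      have := abs_sub_abs_le_abs_sub (p * e) (-δ)
      simp only [sub_neg_eq_add] at this
      rw [abs_neg] at this
      rw [add_comm]
      linarith
    linarith


def radioLab (t k : ℕ) : ℤ → ℕ := fun x =>
  ((k + 1) / 2) *
    (if 2 * ((x % ((t * k : ℕ) + 1 : ℤ)).toNat) ≤ t * k
      then 2 * ((x % ((t * k : ℕ) + 1 : ℤ)).toNat)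
      else 2 * ((x % ((t * k : ℕ) + 1 : ℤ)).toNat) - (2 * (t * k / 2) + 1))

/-- For `t ≥ 2` and odd `k ≥ 1`, `rl_k(D(1,2,…,t)) ≤ (t/2)k² + (t/2)k`. -/
theorem radio_upper_D1t_odd (t k : ℕ) (ht : 2 ≤ t) (hk : 1 ≤ k) (hko : Odd k) :
    ∃ c : ℤ → ℕ, IsRadioLabeling (distGraph {d : ℤ | 1 ≤ d ∧ d ≤ (t : ℤ)}) k c ∧
      ∀ x : ℤ, (c x : ℝ) ≤ ((t : ℝ) / 2) * (k : ℝ) ^ 2 + ((t : ℝ) / 2) * k := by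
  obtain ⟨j, hj⟩ := hko
  set n : ℕ := t * k with hn
  set q : ℕ := n / 2 with hq
  set m : ℕ := (k + 1) / 2 with hm
  have hm' : k + 1 = 2 * m := by omega
  obtain ⟨T, hT⟩ : ∃ T : ℕ, t * m = T := ⟨t * m, rfl⟩
  have hnT : n + t = 2 * T := by
    rw [hn, ← hT, show t * k + t = t * (k + 1) by ring, hm']; ring
  have hq1 : 2 * q ≤ n := by omega
  have hq2 : n ≤ 2 * q + 1 := by omega
  set p : ℤ := (n : ℤ) + 1 with hp
  have hppos : 0 < p := by positivity
  -- residue facts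
  have hres : ∀ x : ℤ, ((((x % p).toNat : ℤ)) = x % p ∧ (x % p).toNat ≤ n ∧
      x = ((x % p).toNat : ℤ) + p * (x / p)) := by
    intro x
    have h1 : 0 ≤ x % p := Int.emod_nonneg x (by omega)
    have h2 : x % p < p := Int.emod_lt_of_pos x hppos
    refine ⟨Int.toNat_of_nonneg h1, by omega, ?_⟩
    rw [Int.toNat_of_nonneg h1]
    rw [Int.emod_def]; ring
  -- values of the labeling
  have hval : ∀ x : ℤ, (radioLab t k x : ℤ) = (m : ℤ) *
      (if 2 * ((x % p).toNat) ≤ n then (2 * ((x % p).toNat : ℤ))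
        else (2 * ((x % p).toNat : ℤ) - (2 * q + 1))) := by
    intro x
    obtain ⟨h1, h2, h3⟩ := hres x
    unfold radioLab
    rw [← hn, ← hp, ← hm, ← hq]
    split
    · push_cast; ring
    · rename_i hcond
      have : 2 * q + 1 ≤ 2 * ((x % p).toNat) := by omega
      push_cast [Nat.sub_add_cancel, this]
      ring
  refine ⟨radioLab t k, ?_, ?_⟩
  · intro x y hxy
    set G := distGraph {d : ℤ | 1 ≤ d ∧ d ≤ (t : ℤ)} with hG
    have hreach : G.Reachable x y := reach t (by omega) x y
    have hd1 : 1 ≤ G.dist x y := hreach.pos_dist_of_ne hxy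
    have hdist : |x - y| ≤ (t : ℤ) * G.dist x y := by
      obtain ⟨w, hw⟩ := hreach.exists_walk_length_eq_dist
      calc |x - y| ≤ (t : ℤ) * w.length := walk_bound t w
        _ = (t : ℤ) * G.dist x y := by rw [hw]
    set d : ℕ := G.dist x y with hd
    obtain ⟨hrx1, hrx2, hrx3⟩ := hres x
    obtain ⟨hry1, hry2, hry3⟩ := hres y
    set rx : ℕ := (x % p).toNat with hrx
    set ry : ℕ := (y % p).toNat with hry
    rw [hval x, hval y]
    -- integer values of h
    set Hx : ℤ := (if 2 * rx ≤ n then (2 * (rx : ℤ)) else (2 * (rx : ℤ) - (2 * q + 1))) with hHx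
    set Hy : ℤ := (if 2 * ry ≤ n then (2 * (ry : ℤ)) else (2 * (ry : ℤ) - (2 * q + 1))) with hHy
    have hcx : Hx = 2 * (rx : ℤ) ∧ 2 * rx ≤ n ∨ Hx = 2 * (rx : ℤ) - (2 * q + 1) ∧ n < 2 * rx := by
      rw [hHx]; split <;> [left; right] <;> constructor <;> first | rfl | omega
    have hcy : Hy = 2 * (ry : ℤ) ∧ 2 * ry ≤ n ∨ Hy = 2 * (ry : ℤ) - (2 * q + 1) ∧ n < 2 * ry := by
      rw [hHy]; split <;> [left; right] <;> constructor <;> first | rfl | omega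
    have habs : |(m : ℤ) * Hx - (m : ℤ) * Hy| = (m : ℤ) * |Hx - Hy| := by
      rw [← mul_sub, abs_mul, abs_of_nonneg (by positivity : (0:ℤ) ≤ (m:ℤ))]
    rw [habs]
    clear_value n q m d rx ry Hx Hy
    have hnz : (n : ℤ) = (t : ℤ) * k := by exact_mod_cast congrArg Nat.cast hn
    rcases eq_or_lt_of_le (abs_nonneg (Hx - Hy)) with h0 | hpos
    · -- |Hx - Hy| = 0 : same residue, |x-y| ≥ p
      have hHeq : Hx = Hy := by
        have := abs_eq_zero.mp h0.symm; linarith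
      have hre : rx = ry := by
        rcases hcx with ⟨e1, b1⟩ | ⟨e1, b1⟩ <;> rcases hcy with ⟨e2, b2⟩ | ⟨e2, b2⟩ <;>
          rw [e1, e2] at hHeq <;> omega
      have hmod : x % p = y % p := by rw [← hrx1, ← hry1, hre]
      have hdvd : p ∣ x - y := Int.ModEq.dvd (hmod.symm)
      have hbig : p ≤ |x - y| := Int.le_of_dvd (abs_pos.mpr (sub_ne_zero.mpr hxy)) ((dvd_abs p (x - y)).mpr hdvd)
      have hdk : (k : ℤ) + 1 ≤ (d : ℤ) := by
        by_contra hcon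
        push_neg at hcon
        have hdk2 : (d : ℤ) ≤ k := by omega
        have : (t : ℤ) * d ≤ (t : ℤ) * k :=
          mul_le_mul_of_nonneg_left hdk2 (by positivity)
        have hpn : (n : ℤ) + 1 ≤ (t:ℤ) * d := le_trans hbig hdist
        linarith
      have hnn : (0:ℤ) ≤ (m : ℤ) * |Hx - Hy| := by positivity
      linarith
    · have hpos' : (1:ℤ) ≤ |Hx - Hy| := hpos
      rcases eq_or_lt_of_le hpos' with h1 | h2
      · -- |Hx - Hy| = 1
        have hone : Hx - Hy = 1 ∨ Hx - Hy = -1 := by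
          rcases abs_eq (by norm_num : (0:ℤ) ≤ 1) |>.mp h1.symm with h | h
          · left; exact h
          · right; exact h
        set B : ℤ := (T : ℤ) - t + 1 with hB
        clear_value B
        have hTz : (T : ℤ) = 2 * (T:ℤ) - T := by ring
        have hdelta : B ≤ |(rx : ℤ) - ry| ∧ |(rx : ℤ) - ry| ≤ p - B := by
          rcases hcx with ⟨e1, b1⟩ | ⟨e1, b1⟩ <;> rcases hcy with ⟨e2, b2⟩ | ⟨e2, b2⟩ <;>
            rw [e1, e2] at hone <;>
            rcases hone with hone | hone <;>
            rcases abs_cases ((rx : ℤ) - (ry : ℤ)) with ⟨he, _⟩ | ⟨he, _⟩ <;>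
            rw [he] <;> omega
        have hBpos : (0:ℤ) < B := by
          have htn : t ≤ n := by
            rw [hn]; exact Nat.le_mul_of_pos_right t (by omega)
          omega
        have hxyB : B ≤ |x - y| := by
          have : x - y = ((rx : ℤ) - ry) + p * (x / p - y / p) := by
            conv_lhs => rw [hrx3, hry3]
            ring
          rw [this]
          exact shift_bound B p _ _ hBpos hdelta.1 hdelta.2
        have hdm : (m : ℤ) ≤ d := by
          by_contra hcon
          push_neg at hcon
          have hdm2 : (d : ℤ) ≤ (m : ℤ) - 1 := by omega
          have h5 : (t : ℤ) * d ≤ (t : ℤ) * ((m:ℤ) - 1) :=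
            mul_le_mul_of_nonneg_left hdm2 (by positivity)
          have h6 : (t : ℤ) * ((m:ℤ) - 1) = (T : ℤ) - t := by
            have : (t:ℤ) * m = T := by exact_mod_cast congrArg Nat.cast hT
            linarith [this]
          have h7 : B ≤ (t:ℤ) * d := le_trans hxyB hdist
          linarith
        rw [← h1]
        have hmk : (k : ℤ) + 1 = 2 * m := by exact_mod_cast congrArg Nat.cast hm'
        omega
      · -- |Hx - Hy| ≥ 2
        have hge : (2:ℤ) ≤ |Hx - Hy| := by
          have := Int.lt_iff_add_one_le.mp h2; linarith
        have hmk : (k : ℤ) + 1 = 2 * m := by exact_mod_cast congrArg Nat.cast hm'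
        have hmm : (m : ℤ) * 2 ≤ (m : ℤ) * |Hx - Hy| :=
          mul_le_mul_of_nonneg_left hge (by positivity)
        have hd1' : (1:ℤ) ≤ (d : ℤ) := by exact_mod_cast hd1
        linarith
  · intro x
    obtain ⟨h1, h2, h3⟩ := hres x
    have hle : radioLab t k x ≤ m * n := by
      have := hval x
      have hb : (radioLab t k x : ℤ) ≤ (m : ℤ) * n := by
        rw [this]
        split
        · rename_i hc
          have : (2 * ((x % p).toNat) : ℤ) ≤ (n : ℤ) := by exact_mod_cast hc
          nlinarith [this, (by positivity : (0:ℤ) ≤ (m:ℤ))]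
        · rename_i hc
          have h4 : (2 * ((x % p).toNat : ℤ) - (2 * q + 1)) ≤ (n : ℤ) := by
            omega
          nlinarith [h4, (by positivity : (0:ℤ) ≤ (m:ℤ))]
      exact_mod_cast hb
    calc (radioLab t k x : ℝ) ≤ ((m * n : ℕ) : ℝ) := by exact_mod_cast hle
      _ = ((t : ℝ) / 2) * (k : ℝ) ^ 2 + ((t : ℝ) / 2) * k := by
          have hmr : (m : ℝ) = ((k : ℝ) + 1) / 2 := by
            have : (2 * m : ℕ) = k + 1 := hm'.symm
            have h5 : (2 : ℝ) * m = (k : ℝ) + 1 := by exact_mod_cast this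
            linarith
          push_cast [hn]
          rw [hmr]; ring
end

section
/- Let t ≥ 3 and k ≥ 1 both be odd integers. Then the radio k-labeling number of the infinite distance graph D(1,t) satisfies rl_k(D(1,t)) ≤ (t/2)k² - 1/2. -/
private lemma key_lb (t D B sv a : ℤ) (ht : 1 ≤ t) (ha : 0 ≤ a)
    (hA : a ≤ |D - B*t|) (h : t*sv - t + 1 ≤ |D| + (t-1)*a) :
    sv ≤ |D - B*t| + |B| := by
  have h1 : |D| ≤ |D - B*t| + |B| * t := by
    calc |D| = |(D - B*t) + B*t| := by ring_nf
    _ ≤ |D - B*t| + |B*t| := abs_add_le _ _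
    _ = |D - B*t| + |B| * t := by rw [abs_mul, abs_of_nonneg (by linarith : (0:ℤ) ≤ t)]
  by_contra hc
  push_neg at hc
  nlinarith [mul_le_mul_of_nonneg_left hA (by linarith : (0:ℤ) ≤ t - 1),
    mul_le_mul_of_nonneg_left (by linarith : |D - B*t| + |B| ≤ sv - 1)
      (by linarith : (0:ℤ) ≤ t)]

private lemma res_lb (T M B : ℤ) (hT : 1 ≤ T) (hM : M % (2*T+1) = T+1) :
    T ≤ |M - B*(2*T+1)| := by
  have h := Int.mul_ediv_add_emod M (2*T+1)
  rw [hM] at h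
  rcases le_or_gt B (M / (2*T+1)) with h1 | h1
  · have h2 : T + 1 ≤ M - B*(2*T+1) := by nlinarith
    calc T ≤ M - B*(2*T+1) := by linarith
    _ ≤ |M - B*(2*T+1)| := le_abs_self _
  · have h2 : M - B*(2*T+1) ≤ -T := by nlinarith
    calc T ≤ -(M - B*(2*T+1)) := by linarith
    _ ≤ |M - B*(2*T+1)| := neg_le_abs _

private lemma mult_cases (m n D : ℤ) (hm : 1 ≤ m) (hD : D = -m + n*(2*m)) :
    |D| = m ∨ 3*m ≤ |D| := by
  have h4 : n ≤ -1 ∨ n = 0 ∨ n = 1 ∨ 2 ≤ n := by omega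
  rcases h4 with h | h | h | h
  · right
    have : D ≤ -(3*m) := by nlinarith
    calc 3*m ≤ -D := by linarith
    _ ≤ |D| := neg_le_abs _
  · left; subst h; simp at hD; rw [hD]; rw [abs_neg, abs_of_nonneg (by linarith)]
  · left; subst h; rw [hD]; rw [(by ring : -m + 1*(2*m) = m), abs_of_nonneg (by linarith)]
  · right
    have : 3*m ≤ D := by nlinarith
    calc 3*m ≤ D := this
    _ ≤ |D| := le_abs_self _

private lemma mult_cases2 (m n D : ℤ) (hm : 1 ≤ m) (hD : D = -(m-1) + n*(2*m)) :
    m - 1 ≤ |D| := by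
  have h4 : n ≤ -1 ∨ n = 0 ∨ 1 ≤ n := by omega
  rcases h4 with h | h | h
  · have : D ≤ -(m-1) - 2*m := by nlinarith
    calc m - 1 ≤ -D := by linarith
    _ ≤ |D| := neg_le_abs _
  · subst h; simp at hD; rw [hD, abs_sub_comm, abs_of_nonneg (by linarith)]
  · have : m - 1 ≤ D := by nlinarith
    linarith [le_abs_self D]

private lemma walk_len_lb (t : ℕ) {x y : ℤ} (w : (distGraph {1, (t:ℤ)}).Walk x y) :
    ∃ B : ℤ, |x - y - B*(t:ℤ)| + |B| ≤ (w.length : ℤ) := by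
  induction w with
  | nil => exact ⟨0, by simp⟩
  | @cons u v z h w ih =>
    obtain ⟨B, hB⟩ := ih
    have h2 := h.2
    simp only [Set.mem_insert_iff, Set.mem_singleton_iff] at h2
    rcases h2 with h1 | h1
    · refine ⟨B, ?_⟩
      have h3 : |u - z - B*(t:ℤ)| ≤ |u - v| + |v - z - B*(t:ℤ)| := by
        calc |u - z - B*(t:ℤ)| = |(u - v) + (v - z - B*(t:ℤ))| := by ring_nf
        _ ≤ _ := abs_add_le _ _
      simp only [SimpleGraph.Walk.length_cons]
      push_cast
      rw [h1] at h3
      linarith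
    · rcases abs_eq (by positivity : (0:ℤ) ≤ (t:ℤ)) |>.mp h1 with h2 | h2
      · refine ⟨B + 1, ?_⟩
        have h3 : u - z - (B+1)*(t:ℤ) = v - z - B*(t:ℤ) := by
          have : u = v + (t:ℤ) := by linarith
          rw [this]; ring
        simp only [SimpleGraph.Walk.length_cons]
        push_cast
        rw [h3]
        have := abs_add_le B (1:ℤ)
        simp at this
        linarith
      · refine ⟨B - 1, ?_⟩
        have h3 : u - z - (B-1)*(t:ℤ) = v - z - B*(t:ℤ) := by
          have : u = v - (t:ℤ) := by linarith
          rw [this]; ring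
        simp only [SimpleGraph.Walk.length_cons]
        push_cast
        rw [h3]
        have := abs_sub B (1:ℤ)
        simp at this
        linarith

private lemma reach_aux (t : ℕ) (x : ℤ) (n : ℕ) :
    (distGraph {1,(t:ℤ)}).Reachable x (x + n) := by
  induction n with
  | zero => simpa using SimpleGraph.Reachable.refl x
  | succ n ih =>
    refine ih.trans (SimpleGraph.Adj.reachable ?_)
    refine ⟨by push_cast; omega, ?_⟩
    have h : (x + (n:ℤ)) - (x + ((n+1:ℕ):ℤ)) = -1 := by push_cast; ring
    show |(x + (n:ℤ)) - (x + ((n+1:ℕ):ℤ))| ∈ ({1, (t:ℤ)} : Set ℤ)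
    rw [h]
    norm_num

private lemma reach_all (t : ℕ) (x y : ℤ) : (distGraph {1,(t:ℤ)}).Reachable x y := by
  rcases le_total x y with h | h
  · have h2 : y = x + ((y - x).toNat : ℤ) := by
      rw [Int.toNat_of_nonneg (by linarith)]; ring
    rw [h2]; exact reach_aux t x _
  · have h2 : x = y + ((x - y).toNat : ℤ) := by
      rw [Int.toNat_of_nonneg (by linarith)]; ring
    exact ((by rw [h2]; exact reach_aux t y _ : (distGraph {1,(t:ℤ)}).Reachable y x)).symm

private lemma dist_lb (t : ℕ) (x y sv : ℤ)
    (h : ∀ B : ℤ, sv ≤ |x - y - B*(t:ℤ)| + |B|) :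
    sv ≤ ((distGraph {1,(t:ℤ)}).dist x y : ℤ) := by
  obtain ⟨w, hw⟩ := (reach_all t x y).exists_walk_length_eq_dist
  obtain ⟨B, hB⟩ := walk_len_lb t w
  calc sv ≤ |x - y - B*(t:ℤ)| + |B| := h B
  _ ≤ (w.length : ℤ) := hB
  _ = _ := by exact_mod_cast hw

set_option maxHeartbeats 1000000 in
/-- For odd `t ≥ 3` and odd `k ≥ 1`, `rl_k(D(1,t)) ≤ (t/2)k² - 1/2`. -/
theorem radio_upper_D1t_pair_odd (t k : ℕ) (ht : 3 ≤ t) (hto : Odd t)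
    (hk : 1 ≤ k) (hko : Odd k) :
    ∃ c : ℤ → ℕ, IsRadioLabeling (distGraph {1, (t : ℤ)}) k c ∧
      ∀ x : ℤ, (c x : ℝ) ≤ ((t : ℝ) / 2) * (k : ℝ) ^ 2 - 1 / 2 := by
  obtain ⟨T', hT'⟩ := hto
  obtain ⟨K', hK'⟩ := hko
  set T : ℤ := (T' : ℤ) with hTdef
  set K : ℤ := (K' : ℤ) with hKdef
  have htZ : (t : ℤ) = 2*T + 1 := by rw [hTdef]; exact_mod_cast congrArg (Nat.cast : ℕ → ℤ) hT'
  have hkZ : (k : ℤ) = 2*K + 1 := by rw [hKdef]; exact_mod_cast congrArg (Nat.cast : ℕ → ℤ) hK'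
  have hT1 : 1 ≤ T := by have : 3 ≤ (t:ℤ) := by exact_mod_cast ht
                         omega
  have hK0 : 0 ≤ K := by positivity
  set m : ℤ := 2*T*K + T + K + 1 with hmdef
  set p : ℤ := 2*m with hpdef
  have hm1 : 1 ≤ m := by linarith [mul_nonneg (show (0:ℤ) ≤ T by linarith) hK0]
  have hp0 : 0 < p := by linarith
  have hptk : p = (t:ℤ)*(k:ℤ) + 1 := by rw [hpdef, hmdef, htZ, hkZ]; ring
  have htpos : (1:ℤ) ≤ (t:ℤ) := by linarith
  set lab : ℤ → ℤ := fun z => if z % p < m then (z % p)*(k:ℤ) else K + (z % p - m)*(k:ℤ)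
    with hlab
  have hrange : ∀ z : ℤ, 0 ≤ z % p ∧ z % p < p :=
    fun z => ⟨Int.emod_nonneg z (by omega), Int.emod_lt_of_pos z hp0⟩
  have hknn : (0:ℤ) ≤ (k:ℤ) := by linarith
  have hlab_nonneg : ∀ z, 0 ≤ lab z := by
    intro z
    rw [hlab]; dsimp only
    split_ifs with h
    · exact mul_nonneg (hrange z).1 hknn
    · push_neg at h
      have h9 := mul_nonneg (show (0:ℤ) ≤ z % p - m by linarith) hknn
      linarith
  -- distance lower bound: dist ≥ 1
  have hd1 : ∀ x y : ℤ, x ≠ y → (1:ℤ) ≤ ((distGraph {1,(t:ℤ)}).dist x y : ℤ) := by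
    intro x y hxy
    apply dist_lb
    intro B
    apply key_lb (t:ℤ) (x-y) B 1 0 htpos le_rfl (abs_nonneg _)
    have h1 : (1:ℤ) ≤ |x - y| := Int.one_le_abs (sub_ne_zero.mpr hxy)
    linarith
  -- case where both ends are in the same half
  have hAB : ∀ x y : ℤ, x ≠ y → lab x - lab y = (x % p - y % p)*(k:ℤ) →
      (k:ℤ) + 1 - ((distGraph {1,(t:ℤ)}).dist x y : ℤ) ≤ |lab x - lab y| := by
    intro x y hxy hdiff
    by_cases hrs : x % p = y % p
    · rw [hdiff, hrs, sub_self, zero_mul, abs_zero]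
      have hdk : (k:ℤ)+1 ≤ ((distGraph {1,(t:ℤ)}).dist x y : ℤ) := by
        apply dist_lb
        intro B
        apply key_lb (t:ℤ) (x-y) B ((k:ℤ)+1) 0 htpos le_rfl (abs_nonneg _)
        have h1 := Int.mul_ediv_add_emod x p
        have h2 := Int.mul_ediv_add_emod y p
        have hDeq : x - y = (x/p - y/p) * p := by linear_combination -h1 + h2 + hrs
        have hn0 : x/p - y/p ≠ 0 := by
          intro h0
          apply hxy
          rw [h0, zero_mul] at hDeq
          linarith
        have hple : p ≤ |x - y| := by
          rw [hDeq, abs_mul, abs_of_nonneg (le_of_lt hp0)]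
          calc p = 1 * p := (one_mul p).symm
          _ ≤ |x/p - y/p| * p :=
            mul_le_mul_of_nonneg_right (Int.one_le_abs hn0) (le_of_lt hp0)
        linarith [hptk]
      linarith
    · have h1 : (1:ℤ) ≤ |x % p - y % p| := Int.one_le_abs (sub_ne_zero.mpr hrs)
      have h2 : (k:ℤ) ≤ |lab x - lab y| := by
        rw [hdiff, abs_mul, abs_of_nonneg hknn]
        calc (k:ℤ) = 1 * (k:ℤ) := (one_mul _).symm
        _ ≤ |x % p - y % p| * (k:ℤ) := mul_le_mul_of_nonneg_right h1 hknn
      linarith [hd1 x y hxy]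
  have hmod : m % (2*T+1) = T+1 := by
    have hm2 : m = (T+1) + (2*T+1)*K := by rw [hmdef]; ring
    rw [hm2, Int.add_mul_emod_self_left, Int.emod_eq_of_lt (by linarith) (by linarith)]
  -- the mixed case: x in first half, y in second half
  have hC : ∀ x y : ℤ, x ≠ y → x % p < m → m ≤ y % p →
      (k:ℤ) + 1 - ((distGraph {1,(t:ℤ)}).dist x y : ℤ) ≤ |lab x - lab y| := by
    intro x y hxy hr hs
    have hlx : lab x = (x % p) * (k:ℤ) := by rw [hlab]; dsimp only; rw [if_pos hr]
    have hly : lab y = K + (y % p - m)*(k:ℤ) := by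
      rw [hlab]; dsimp only; rw [if_neg (not_lt.mpr hs)]
    set j : ℤ := y % p - m - x % p with hjdef
    have hdiff : lab x - lab y = -(j*(k:ℤ) + K) := by rw [hlx, hly, hjdef]; ring
    have h1 := Int.mul_ediv_add_emod x p
    have h2 := Int.mul_ediv_add_emod y p
    have hDeq : x - y = -(m + j) + (x / p - y / p) * (2*m) := by
      rw [hjdef]
      linear_combination -h1 + h2 + (x/p - y/p) * hpdef
    rcases (by omega : j ≤ -2 ∨ j = -1 ∨ j = 0 ∨ 1 ≤ j) with hj | hj | hj | hj
    · -- j ≤ -2 : label gap ≥ k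
      have h3 : (k:ℤ) ≤ -(j*(k:ℤ) + K) := by
        have h9 := mul_le_mul_of_nonneg_right (show (2:ℤ) ≤ -j by linarith) hknn
        linarith [hkZ, hK0]
      have h4 : (k:ℤ) ≤ |lab x - lab y| := by
        rw [hdiff, abs_neg]
        exact h3.trans (neg_le_abs _)
      linarith [hd1 x y hxy]
    · -- j = -1 : label gap (k+1)/2, distance ≥ (k+1)/2
      have hDeq1 : x - y = -(m-1) + (x / p - y / p) * (2*m) := by
        rw [hj] at hDeq
        linear_combination hDeq
      have hDlb := mult_cases2 m (x/p - y/p) (x - y) hm1 hDeq1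
      have hdist : K+1 ≤ ((distGraph {1,(t:ℤ)}).dist x y : ℤ) := by
        apply dist_lb
        intro B
        apply key_lb (t:ℤ) (x-y) B (K+1) 0 htpos le_rfl (abs_nonneg _)
        rw [htZ]
        linarith [hDlb, hmdef, hT1]
      have h4 : lab x - lab y = (k:ℤ) - K := by
        rw [hj] at hdiff
        linear_combination hdiff
      rw [h4, abs_of_nonneg (by linarith : (0:ℤ) ≤ (k:ℤ) - K)]
      linarith
    · -- j = 0 : label gap (k-1)/2, distance ≥ (k+3)/2
      have hDeq0 : x - y = -m + (x / p - y / p) * (2*m) := by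
        rw [hj] at hDeq
        linear_combination hDeq
      have hdist : K+2 ≤ ((distGraph {1,(t:ℤ)}).dist x y : ℤ) := by
        apply dist_lb
        intro B
        rcases mult_cases m (x/p - y/p) (x - y) hm1 hDeq0 with hcase | hcase
        · -- |x-y| = m : use the residue refinement
          have habs : T ≤ |x - y - B*(t:ℤ)| := by
            rw [htZ]
            rcases (abs_eq (by linarith : (0:ℤ) ≤ m)).mp hcase with h5 | h5
            · rw [h5]; exact res_lb T m B hT1 hmod
            · have h6 : x - y - B*(2*T+1) = -(m - (-B)*(2*T+1)) := by rw [h5]; ring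
              rw [h6, abs_neg]; exact res_lb T m (-B) hT1 hmod
          apply key_lb (t:ℤ) (x-y) B (K+2) T htpos (by linarith) habs
          rw [htZ, hcase]
          linarith [hmdef,
            mul_nonneg (show (0:ℤ) ≤ 2*T+1 by linarith) (show (0:ℤ) ≤ T-1 by linarith)]
        · apply key_lb (t:ℤ) (x-y) B (K+2) 0 htpos le_rfl (abs_nonneg _)
          rw [htZ]
          linarith [hcase, hmdef, hT1,
            mul_nonneg (show (0:ℤ) ≤ T by linarith) hK0]
      have h4 : lab x - lab y = -K := by
        rw [hj] at hdiff
        linear_combination hdiff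
      rw [h4, abs_neg, abs_of_nonneg hK0]
      linarith
    · -- 1 ≤ j : label gap ≥ k
      have h3 : (k:ℤ) ≤ j*(k:ℤ) + K := by
        have h9 := mul_le_mul_of_nonneg_right (show (1:ℤ) ≤ j by linarith) hknn
        linarith [hK0]
      have h4 : (k:ℤ) ≤ |lab x - lab y| := by
        rw [hdiff, abs_neg]
        exact h3.trans (le_abs_self _)
      linarith [hd1 x y hxy]
  have main : ∀ x y : ℤ, x ≠ y →
      (k:ℤ) + 1 - ((distGraph {1,(t:ℤ)}).dist x y : ℤ) ≤ |lab x - lab y| := by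
    intro x y hxy
    rcases lt_or_ge (x % p) m with hr | hr <;> rcases lt_or_ge (y % p) m with hs | hs
    · apply hAB x y hxy
      rw [hlab]; dsimp only; rw [if_pos hr, if_pos hs]; ring
    · exact hC x y hxy hr hs
    · have h5 := hC y x hxy.symm hs hr
      rw [SimpleGraph.dist_comm, abs_sub_comm]
      exact h5
    · apply hAB x y hxy
      rw [hlab]; dsimp only
      rw [if_neg (not_lt.mpr hr), if_neg (not_lt.mpr hs)]; ring
  refine ⟨fun z => (lab z).toNat, ?_, ?_⟩
  · intro x y hxy
    have hcx : (((lab x).toNat : ℤ)) = lab x := Int.toNat_of_nonneg (hlab_nonneg x)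
    have hcy : (((lab y).toNat : ℤ)) = lab y := Int.toNat_of_nonneg (hlab_nonneg y)
    simpa [hcx, hcy] using main x y hxy
  · intro x
    have h2 : 2 * lab x ≤ (t:ℤ)*(k:ℤ)^2 - 1 := by
      rw [hlab]; dsimp only
      have hr1 := (hrange x).1
      have hr2 := (hrange x).2
      split_ifs with h
      · rw [htZ, hkZ]
        linarith [hmdef, hK0, mul_le_mul_of_nonneg_right
          (show x % p ≤ 2*T*K + T + K by linarith [hmdef])
          (show (0:ℤ) ≤ 2*K+1 by linarith)]
      · push_neg at h
        rw [htZ, hkZ]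
        linarith [hmdef, hpdef, hK0, mul_le_mul_of_nonneg_right
          (show x % p - m ≤ 2*T*K + T + K by linarith [hmdef, hpdef])
          (show (0:ℤ) ≤ 2*K+1 by linarith)]
    have h5 : (((lab x).toNat : ℤ) : ℝ) = ((lab x).toNat : ℝ) := by push_cast; ring
    show (((lab x).toNat : ℝ)) ≤ ((t : ℝ) / 2) * (k : ℝ) ^ 2 - 1 / 2
    rw [← h5, Int.toNat_of_nonneg (hlab_nonneg x)]
    have h4 : ((2 * lab x : ℤ) : ℝ) ≤ (((t:ℤ)*(k:ℤ)^2 - 1 : ℤ) : ℝ) := by exact_mod_cast h2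
    push_cast at h4
    linarith
end
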